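/- Let f, g ∈ ℂ[[x,y]] be convenient power series. If the quotient ring ℂ[[x,y]]/(f,g) is finite-dimensional as a ℂ-vector space, then dim_ℂ ℂ[[x,y]]/(f,g) ≥ [Δ_f, Δ_g]. (With the convention that the intersection multiplicity (f,g)₀ = dim_ℂ ℂ[[x,y]]/(f,g) is +∞ when the quotient is infinite-dimensional, this says (f,g)₀ ≥ [Δ_f, Δ_g].) -/

import Mathlib

open MeasureTheory Pointwise

noncomputable section

/-- The ring ℂ[[x,y]] of formal power series in two variables over ℂ. -/
abbrev PS := MvPowerSeries (Fin 2) ℂ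

/-- The exponent pair (i,j) as a multi-index for `MvPowerSeries (Fin 2) ℂ`. -/
def idx (p : ℕ × ℕ) : Fin 2 →₀ ℕ := Finsupp.single 0 p.1 + Finsupp.single 1 p.2

/-- The coefficient a_{ij} of x^i y^j in f. -/
def coef (f : PS) (p : ℕ × ℕ) : ℂ := MvPowerSeries.coeff (idx p) f

/-- The support of f: the set of (i,j) ∈ ℕ² with a_{ij} ≠ 0. -/
def supp (f : PS) : Set (ℕ × ℕ) := {p | coef f p ≠ 0}

/-- f is convenient if f(x,0) ≠ 0 and f(0,y) ≠ 0. -/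
def Convenient (f : PS) : Prop := (∃ i, coef f (i, 0) ≠ 0) ∧ (∃ j, coef f (0, j) ≠ 0)

/-- The Newton diagram Δ_f ⊂ ℝ²: the convex hull of ∪_{(i,j) ∈ supp f} ((i,j) + ℝ₊²). -/
def newtonDiagram (f : PS) : Set (ℝ × ℝ) :=
  convexHull ℝ (⋃ p ∈ supp f, {q : ℝ × ℝ | (p.1 : ℝ) ≤ q.1 ∧ (p.2 : ℝ) ≤ q.2})

/-- The first quadrant ℝ₊² ⊂ ℝ². -/
def quadrant : Set (ℝ × ℝ) := {q | 0 ≤ q.1 ∧ 0 ≤ q.2}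

/-- P(Δ) = Area(ℝ₊² ∖ Δ) (Lebesgue measure). -/
def areaP (Δ : Set (ℝ × ℝ)) : ℝ := (volume (quadrant \ Δ)).toReal

/-- a: the t-order of f(t,0), i.e. where Δ_f meets the horizontal axis. -/
def xOrder (f : PS) : ℕ := sInf {i | coef f (i, 0) ≠ 0}

/-- b: the t-order of f(0,t), i.e. where Δ_f meets the vertical axis. -/
def yOrder (f : PS) : ℕ := sInf {j | coef f (0, j) ≠ 0}

/-- μ(Δ_f) = 2P(Δ_f) − a − b + 1. -/
def muNewton (f : PS) : ℝ := 2 * areaP (newtonDiagram f) - xOrder f - yOrder f + 1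

/-- The Newton polygon N_f: the union of the compact faces of Δ_f, i.e. the points of Δ_f
that minimize over Δ_f some linear form with strictly positive coefficients. -/
def newtonPolygon (f : PS) : Set (ℝ × ℝ) :=
  {q | q ∈ newtonDiagram f ∧ ∃ w : ℝ × ℝ, 0 < w.1 ∧ 0 < w.2 ∧
    ∀ q' ∈ newtonDiagram f, q.1 * w.1 + q.2 * w.2 ≤ q'.1 * w.1 + q'.2 * w.2}

/-- r(Δ_f): the number of points of ℤ² lying on the Newton polygon N_f, minus 1. -/
def rNewton (f : PS) : ℕ :=
  Nat.card {p : ℤ × ℤ // ((p.1 : ℝ), (p.2 : ℝ)) ∈ newtonPolygon f} - 1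

/-- δ(Δ_f) = (μ(Δ_f) + r(Δ_f) − 1)/2. -/
def deltaNewton (f : PS) : ℝ := (muNewton f + rNewton f - 1) / 2

/-- The mixed Minkowski volume [Δ_f, Δ_g] = P(Δ_f + Δ_g) − P(Δ_f) − P(Δ_g),
where Δ_f + Δ_g is the Minkowski sum. -/
def mixedVol (f g : PS) : ℝ :=
  areaP (newtonDiagram f + newtonDiagram g) - areaP (newtonDiagram f) - areaP (newtonDiagram g)

/-- l(f,w) = min_{(i,j) ∈ supp f} (i·w₁ + j·w₂). -/
def lFun (f : PS) (w : ℕ × ℕ) : ℕ := sInf ((fun p : ℕ × ℕ => p.1 * w.1 + p.2 * w.2) '' supp f)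

/-- The part of the support of f lying on the face of Δ_f determined by the weight w. -/
def face (f : PS) (w : ℕ × ℕ) : Set (ℕ × ℕ) :=
  {p | p ∈ supp f ∧ p.1 * w.1 + p.2 * w.2 = lFun f w}

/-- The partial derivative ∂f/∂x_k of a power series in two variables. -/
def pd (k : Fin 2) (f : PS) : PS :=
  fun d => ((d k : ℂ) + 1) * MvPowerSeries.coeff (d + Finsupp.single k 1) f

/-- f is Newton nondegenerate: for every compact face γ of Δ_f (the faces of Δ_f cut out
by a weight w with strictly positive coordinates), the system
x·∂f_γ/∂x = y·∂f_γ/∂y = 0 has no solution in (ℂ∖{0})². -/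
def NewtonND (f : PS) : Prop :=
  ∀ w : ℕ × ℕ, 1 ≤ w.1 → 1 ≤ w.2 →
    ¬ ∃ x y : ℂ, x ≠ 0 ∧ y ≠ 0 ∧
      (∑ᶠ p ∈ face f w, (p.1 : ℂ) * coef f p * x ^ p.1 * y ^ p.2) = 0 ∧
      (∑ᶠ p ∈ face f w, (p.2 : ℂ) * coef f p * x ^ p.1 * y ^ p.2) = 0

/-- The pair (f,g) is nondegenerate: for every w ∈ ℕ² ∖ {(0,0)} the system
f_w = g_w = 0 has no solution in (ℂ∖{0})². -/
def PairND (f g : PS) : Prop :=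
  ∀ w : ℕ × ℕ, w ≠ (0, 0) →
    ¬ ∃ x y : ℂ, x ≠ 0 ∧ y ≠ 0 ∧
      (∑ᶠ p ∈ face f w, coef f p * x ^ p.1 * y ^ p.2) = 0 ∧
      (∑ᶠ p ∈ face g w, coef g p * x ^ p.1 * y ^ p.2) = 0

/-! ### auxiliary: multi-index bookkeeping -/

def kpr (d : Fin 2 →₀ ℕ) : ℕ × ℕ := (d 0, d 1)

lemma idx_pr (d : Fin 2 →₀ ℕ) : idx (kpr d) = d := by
  ext k
  fin_cases k <;> simp [kpr, idx, Finsupp.single_apply]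

lemma pr_idx (p : ℕ × ℕ) : kpr (idx p) = p := by
  simp [kpr, idx, Finsupp.single_apply, Prod.ext_iff]

lemma idx_injective : Function.Injective idx := by
  intro a b h
  have := congrArg kpr h
  rwa [pr_idx, pr_idx] at this

lemma pr_add (d e : Fin 2 →₀ ℕ) : kpr (d + e) = kpr d + kpr e := by
  simp [kpr, Prod.ext_iff]

lemma coef_sub (u v : PS) (p : ℕ × ℕ) : coef (u - v) p = coef u p - coef v p := by
  simp [coef]

lemma coef_add' (u v : PS) (p : ℕ × ℕ) : coef (u + v) p = coef u p + coef v p := by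
  simp [coef]

lemma coef_mul_mem {u w : PS} {S1 S2 S3 : Set (ℕ × ℕ)}
    (h1 : ∀ p, coef u p ≠ 0 → p ∈ S1) (h2 : ∀ p, coef w p ≠ 0 → p ∈ S2)
    (h3 : ∀ p q, p ∈ S1 → q ∈ S2 → p + q ∈ S3) :
    ∀ p, coef (u * w) p ≠ 0 → p ∈ S3 := by
  intro p hp
  rw [coef, MvPowerSeries.coeff_mul] at hp
  obtain ⟨x, hx, hne⟩ := Finset.exists_ne_zero_of_sum_ne_zero hp
  rw [Finset.HasAntidiagonal.mem_antidiagonal] at hx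
  have h1' : coef u (kpr x.1) ≠ 0 := by
    rw [coef, idx_pr]; exact left_ne_zero_of_mul hne
  have h2' : coef w (kpr x.2) ≠ 0 := by
    rw [coef, idx_pr]; exact right_ne_zero_of_mul hne
  have hps : p = kpr x.1 + kpr x.2 := by rw [← pr_add, hx, pr_idx]
  rw [hps]; exact h3 _ _ (h1 _ h1') (h2 _ h2')


/-! ### auxiliary: Newton diagram geometry -/

def kι (p : ℕ × ℕ) : ℝ × ℝ := ((p.1 : ℝ), (p.2 : ℝ))

lemma kι_add (p q : ℕ × ℕ) : kι (p + q) = kι p + kι q := by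
  simp [kι, Prod.ext_iff]

lemma mem_nd_of_supp {f : PS} {p : ℕ × ℕ} (h : p ∈ supp f) : kι p ∈ newtonDiagram f := by
  apply subset_convexHull
  exact Set.mem_biUnion h ⟨le_refl _, le_refl _⟩

def KUpward (X : Set (ℝ × ℝ)) : Prop := ∀ x ∈ X, ∀ v : ℝ × ℝ, 0 ≤ v.1 → 0 ≤ v.2 → x + v ∈ X

lemma nd_upward (f : PS) : KUpward (newtonDiagram f) := by
  intro x hx v hv1 hv2
  have hC : Convex ℝ {y : ℝ × ℝ | y + v ∈ newtonDiagram f} := by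
    have h1 : Convex ℝ (newtonDiagram f) := convex_convexHull ℝ _
    have he : {y : ℝ × ℝ | y + v ∈ newtonDiagram f} = (fun z => -v + z) '' newtonDiagram f := by
      ext y
      constructor
      · intro hy; exact ⟨y + v, hy, by show -v + (y + v) = y; rw [add_comm y v, neg_add_cancel_left]⟩
      · rintro ⟨z, hz, rfl⟩
        simpa [Set.mem_setOf_eq, neg_add_cancel_right] using hz
    rw [he]; exact h1.translate _
  have hsub : newtonDiagram f ⊆ {y | y + v ∈ newtonDiagram f} := by
    apply convexHull_min _ hC
    intro y hy
    simp only [Set.mem_iUnion, exists_prop] at hy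
    obtain ⟨p, hp, h1, h2⟩ := hy
    show y + v ∈ newtonDiagram f
    apply subset_convexHull
    refine Set.mem_biUnion hp ⟨?_, ?_⟩
    · simpa using le_trans h1 (by linarith [hv1] : y.1 ≤ y.1 + v.1)
    · simpa using le_trans h2 (by linarith [hv2] : y.2 ≤ y.2 + v.2)
  exact hsub hx

lemma upward_add {X Y : Set (ℝ × ℝ)} (hX : KUpward X) : KUpward (X + Y) := by
  rintro x hx v hv1 hv2
  rcases Set.mem_add.mp hx with ⟨a, ha, b, hb, rfl⟩
  have he : a + v + b = a + b + v := by abel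
  exact he ▸ Set.add_mem_add (hX a ha v hv1 hv2) hb

lemma outside_subset {X : Set (ℝ × ℝ)} (hup : KUpward X) {a b : ℕ}
    (ha : ((a : ℝ), (0 : ℝ)) ∈ X) (hb : ((0 : ℝ), (b : ℝ)) ∈ X) {t : ℝ × ℝ}
    (ht1 : 0 ≤ t.1) (ht2 : 0 ≤ t.2) :
    {p : ℕ × ℕ | kι p + t ∉ X} ⊆ ↑(Finset.range a ×ˢ Finset.range b) := by
  intro p hp
  simp only [Set.mem_setOf_eq] at hp
  by_contra hmem
  simp only [Finset.coe_product, Set.mem_prod, Finset.mem_coe, Finset.mem_range, not_and_or,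
    not_lt] at hmem
  apply hp
  rcases hmem with h1 | h2
  · have hv := hup _ ha (((p.1 : ℝ) - a) + t.1, (p.2 : ℝ) + t.2)
      (by have : (a : ℝ) ≤ (p.1 : ℝ) := by exact_mod_cast h1
          dsimp only; linarith)
      (by dsimp only; positivity)
    have he : ((a : ℝ), (0 : ℝ)) + (((p.1 : ℝ) - a) + t.1, (p.2 : ℝ) + t.2) = kι p + t := by
      simp only [Prod.mk_add_mk, kι, Prod.ext_iff, Prod.fst_add, Prod.snd_add]
      constructor <;> ring
    exact he ▸ hv
  · have hv := hup _ hb ((p.1 : ℝ) + t.1, ((p.2 : ℝ) - b) + t.2)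
      (by dsimp only; positivity)
      (by have : (b : ℝ) ≤ (p.2 : ℝ) := by exact_mod_cast h2
          dsimp only; linarith)
    have he : ((0 : ℝ), (b : ℝ)) + ((p.1 : ℝ) + t.1, ((p.2 : ℝ) - b) + t.2) = kι p + t := by
      simp only [Prod.mk_add_mk, kι, Prod.ext_iff, Prod.fst_add, Prod.snd_add]
      constructor <;> ring
    exact he ▸ hv

lemma compl_subset_box {X : Set (ℝ × ℝ)} (hup : KUpward X) {a b : ℕ}
    (ha : ((a : ℝ), (0 : ℝ)) ∈ X) (hb : ((0 : ℝ), (b : ℝ)) ∈ X) :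
    quadrant \ X ⊆ Set.Ico (0 : ℝ) a ×ˢ Set.Ico (0 : ℝ) b := by
  rintro q ⟨hq, hqX⟩
  obtain ⟨hq1, hq2⟩ := hq
  constructor
  · refine ⟨hq1, ?_⟩
    by_contra hlt
    push_neg at hlt
    apply hqX
    have hv := hup _ ha (q.1 - a, q.2) (by dsimp only; linarith) (by dsimp only; linarith)
    have he : ((a : ℝ), (0 : ℝ)) + (q.1 - a, q.2) = q := by
      simp only [Prod.mk_add_mk, Prod.ext_iff]; constructor <;> ring
    exact he ▸ hv
  · refine ⟨hq2, ?_⟩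
    by_contra hlt
    push_neg at hlt
    apply hqX
    have hv := hup _ hb (q.1, q.2 - b) (by dsimp only; linarith) (by dsimp only; linarith)
    have he : ((0 : ℝ), (b : ℝ)) + (q.1, q.2 - b) = q := by
      simp only [Prod.mk_add_mk, Prod.ext_iff]; constructor <;> ring
    exact he ▸ hv

/-! ### auxiliary: measure-theoretic unfolding -/

open scoped ENNReal

def kcell : Set (ℝ × ℝ) := Set.Ico (0 : ℝ) 1 ×ˢ Set.Ico (0 : ℝ) 1

def kcellAt (p : ℕ × ℕ) : Set (ℝ × ℝ) :=
  Set.Ico (p.1 : ℝ) (p.1 + 1) ×ˢ Set.Ico (p.2 : ℝ) (p.2 + 1)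

def kT (X : Set (ℝ × ℝ)) (p : ℕ × ℕ) : Set (ℝ × ℝ) := kcell ∩ {t | kι p + t ∉ X}

def kN (X : Set (ℝ × ℝ)) (t : ℝ × ℝ) : ℝ≥0∞ := ∑' p : ℕ × ℕ, (kT X p).indicator 1 t

lemma measurable_kcell : MeasurableSet kcell := measurableSet_Ico.prod measurableSet_Ico

lemma iUnion_kcellAt : ⋃ p : ℕ × ℕ, kcellAt p = quadrant := by
  ext q
  simp only [Set.mem_iUnion, kcellAt, Set.mem_prod, Set.mem_Ico, quadrant, Set.mem_setOf_eq]
  constructor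
  · rintro ⟨p, ⟨h1, _⟩, ⟨h2, _⟩⟩
    exact ⟨le_trans (by positivity) h1, le_trans (by positivity) h2⟩
  · rintro ⟨h1, h2⟩
    exact ⟨(⌊q.1⌋₊, ⌊q.2⌋₊), ⟨Nat.floor_le h1, Nat.lt_floor_add_one q.1⟩,
      ⟨Nat.floor_le h2, Nat.lt_floor_add_one q.2⟩⟩

lemma disjoint_kcellAt : Pairwise (Function.onFun Disjoint kcellAt) := by
  intro p q hpq
  rw [Function.onFun, Set.disjoint_left]
  intro x hx hx'
  obtain ⟨⟨a1, a2⟩, ⟨a3, a4⟩⟩ := hx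
  obtain ⟨⟨b1, b2⟩, ⟨b3, b4⟩⟩ := hx'
  apply hpq
  have h1 : p.1 = q.1 := by
    have c1 : (p.1 : ℝ) < q.1 + 1 := lt_of_le_of_lt a1 b2
    have c2 : (q.1 : ℝ) < p.1 + 1 := lt_of_le_of_lt b1 a2
    have d1 : p.1 < q.1 + 1 := by exact_mod_cast c1
    have d2 : q.1 < p.1 + 1 := by exact_mod_cast c2
    omega
  have h2 : p.2 = q.2 := by
    have c1 : (p.2 : ℝ) < q.2 + 1 := lt_of_le_of_lt a3 b4
    have c2 : (q.2 : ℝ) < p.2 + 1 := lt_of_le_of_lt b3 a4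
    have d1 : p.2 < q.2 + 1 := by exact_mod_cast c1
    have d2 : q.2 < p.2 + 1 := by exact_mod_cast c2
    omega
  exact Prod.ext h1 h2

lemma kT_nullMeasurable {X : Set (ℝ × ℝ)} (hnm : NullMeasurableSet X volume) (p : ℕ × ℕ) :
    NullMeasurableSet (kT X p) volume := by
  have h2 : NullMeasurableSet ((kι p + ·) ⁻¹' Xᶜ) volume :=
    hnm.compl.preimage (measurePreserving_add_left volume (kι p)).quasiMeasurePreserving
  exact measurable_kcell.nullMeasurableSet.inter h2

lemma vol_cell_eq {X : Set (ℝ × ℝ)} (p : ℕ × ℕ) :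
    volume (kcellAt p \ X) = volume (kT X p) := by
  have he : (kι p + ·) ⁻¹' (kcellAt p \ X) = kT X p := by
    ext t
    simp only [Set.mem_preimage, Set.mem_diff, kcellAt, kT, kcell, Set.mem_prod, Set.mem_Ico,
      Set.mem_inter_iff, Set.mem_setOf_eq, kι, Prod.fst_add, Prod.snd_add]
    constructor
    · rintro ⟨⟨⟨h1, h2⟩, h3, h4⟩, h5⟩
      exact ⟨⟨⟨by linarith, by linarith⟩, by linarith, by linarith⟩, h5⟩
    · rintro ⟨⟨⟨h1, h2⟩, h3, h4⟩, h5⟩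
      exact ⟨⟨⟨by linarith, by linarith⟩, by linarith, by linarith⟩, h5⟩
  rw [← he, measure_preimage_add]

lemma vol_eq_lintegral {X : Set (ℝ × ℝ)} (hnm : NullMeasurableSet X volume) :
    volume (quadrant \ X) = ∫⁻ t, kN X t := by
  have h1 : quadrant \ X = ⋃ p : ℕ × ℕ, (kcellAt p \ X) := by
    rw [← iUnion_kcellAt, Set.iUnion_diff]
  have hmeas : ∀ p : ℕ × ℕ, MeasurableSet (kcellAt p) :=
    fun p => measurableSet_Ico.prod measurableSet_Ico
  rw [h1, measure_iUnion₀
    (disjoint_kcellAt.mono fun i j hd => ((hd.mono Set.diff_subset Set.diff_subset).aedisjoint))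
    (fun p => (hmeas p).nullMeasurableSet.diff hnm)]
  calc ∑' p : ℕ × ℕ, volume (kcellAt p \ X)
      = ∑' p : ℕ × ℕ, volume (kT X p) := tsum_congr fun p => vol_cell_eq p
    _ = ∑' p : ℕ × ℕ, ∫⁻ t, (kT X p).indicator 1 t :=
        tsum_congr fun p => (lintegral_indicator_one₀ (kT_nullMeasurable hnm p)).symm
    _ = ∫⁻ t, kN X t :=
        (lintegral_tsum fun p => aemeasurable_const.indicator₀ (kT_nullMeasurable hnm p)).symm

lemma kN_aemeasurable {X : Set (ℝ × ℝ)} (hnm : NullMeasurableSet X volume) :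
    AEMeasurable (kN X) volume :=
  AEMeasurable.ennreal_tsum fun p => aemeasurable_const.indicator₀ (kT_nullMeasurable hnm p)

lemma kN_of_not_mem {X : Set (ℝ × ℝ)} {t : ℝ × ℝ} (ht : t ∉ kcell) : kN X t = 0 := by
  rw [kN]
  have : ∀ p : ℕ × ℕ, (kT X p).indicator (1 : (ℝ × ℝ) → ℝ≥0∞) t = 0 :=
    fun p => Set.indicator_of_notMem (fun h => ht h.1) _
  rw [tsum_congr this, tsum_zero]

lemma kN_eq_ncard {X : Set (ℝ × ℝ)} {t : ℝ × ℝ} (ht : t ∈ kcell)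
    (hfin : {p : ℕ × ℕ | kι p + t ∉ X}.Finite) :
    kN X t = ({p : ℕ × ℕ | kι p + t ∉ X}.ncard : ℝ≥0∞) := by
  classical
  have h1 : ∀ p : ℕ × ℕ, (kT X p).indicator (1 : (ℝ × ℝ) → ℝ≥0∞) t
      = Set.indicator {p : ℕ × ℕ | kι p + t ∉ X} (fun _ => (1 : ℝ≥0∞)) p := by
    intro p
    rw [Set.indicator_apply, Set.indicator_apply]
    have hiff : t ∈ kT X p ↔ p ∈ {p : ℕ × ℕ | kι p + t ∉ X} := by
      simp [kT, ht]
    simp only [hiff, Pi.one_apply]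
  rw [kN, tsum_congr h1, tsum_eq_sum (s := hfin.toFinset)
    (fun p hp => Set.indicator_of_notMem (by rwa [Set.Finite.mem_toFinset] at hp) _)]
  rw [Finset.sum_congr rfl
    (fun p hp => Set.indicator_of_mem (by rwa [Set.Finite.mem_toFinset] at hp) _)]
  rw [Set.ncard_eq_toFinset_card _ hfin]
  simp

/-! ### auxiliary: the linear algebra bound -/

def liftL (s : Finset (ℕ × ℕ)) : (s → ℂ) →ₗ[ℂ] PS where
  toFun φ := ∑ p : s, φ p • (MvPowerSeries.monomial (idx p.val) 1)
  map_add' φ χ := by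
    simp only [Pi.add_apply, add_smul, Finset.sum_add_distrib]
  map_smul' c φ := by
    simp only [Pi.smul_apply, smul_eq_mul, RingHom.id_apply, Finset.smul_sum, smul_smul]

lemma coef_liftL (s : Finset (ℕ × ℕ)) (φ : s → ℂ) (q : ℕ × ℕ) :
    coef (liftL s φ) q = if h : q ∈ s then φ ⟨q, h⟩ else 0 := by
  classical
  rw [coef, liftL]
  simp only [LinearMap.coe_mk, AddHom.coe_mk]
  rw [map_sum]
  have hterm : ∀ p : s,
      (MvPowerSeries.coeff (idx q)) (φ p • MvPowerSeries.monomial (idx p.val) 1)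
      = if q = p.val then φ p else 0 := by
    intro p
    rw [LinearMap.map_smul, MvPowerSeries.coeff_monomial]
    by_cases h : q = p.val
    · rw [if_pos h, if_pos (by rw [h]), smul_eq_mul, mul_one]
    · rw [if_neg h, if_neg (fun hc => h (idx_injective hc)), smul_eq_mul, mul_zero]
  rw [Finset.sum_congr rfl (fun p _ => hterm p)]
  by_cases h : q ∈ s
  · rw [dif_pos h, Fintype.sum_eq_single (⟨q, h⟩ : s)
      (fun b hb => if_neg (fun hc => hb (Subtype.ext hc.symm))), if_pos rfl]
  · rw [dif_neg h]
    exact Finset.sum_eq_zero fun p _ => if_neg (fun hc => h (by rw [hc]; exact p.property))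

set_option maxHeartbeats 2000000 in
lemma card_bound (f g : PS) (hfin : FiniteDimensional ℂ (PS ⧸ Ideal.span {f, g}))
    {t : ℝ × ℝ} (FA FB FAB : Finset (ℕ × ℕ))
    (hFA : ∀ p : ℕ × ℕ, p ∈ FA ↔ kι p + t ∉ newtonDiagram f)
    (hFB : ∀ p : ℕ × ℕ, p ∈ FB ↔ kι p + t ∉ newtonDiagram g)
    (hFAB : ∀ p : ℕ × ℕ, p ∈ FAB ↔ kι p + t ∉ newtonDiagram f + newtonDiagram g) :
    FAB.card ≤ FA.card + FB.card + Module.finrank ℂ (PS ⧸ Ideal.span {f, g}) := by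
  classical
  set I := Ideal.span {f, g} with hIdef
  set n := Module.finrank ℂ (PS ⧸ I) with hndef
  -- the coefficient projection
  set π : PS →ₗ[ℂ] (FAB → ℂ) :=
    LinearMap.pi (fun p : FAB => MvPowerSeries.coeff (idx p.val)) with hπdef
  have hπ : ∀ (h : PS) (p : FAB), π h p = coef h p.val := fun _ _ => rfl
  set ψ : ((FB → ℂ) × (FA → ℂ)) →ₗ[ℂ] (FAB → ℂ) :=
    π ∘ₗ (LinearMap.coprod ((LinearMap.mulRight ℂ f) ∘ₗ liftL FB)
      ((LinearMap.mulRight ℂ g) ∘ₗ liftL FA)) with hψdef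
  set R := LinearMap.range ψ with hRdef
  -- Step A : the ideal projects into R
  have stepA : ∀ h ∈ I, π h ∈ R := by
    intro h hh
    obtain ⟨u, v, huv⟩ := Ideal.mem_span_pair.mp hh
    set u' : PS := liftL FB (fun p => coef u p.val) with hu'def
    set v' : PS := liftL FA (fun p => coef v p.val) with hv'def
    refine ⟨(fun p => coef u p.val, fun p => coef v p.val), ?_⟩
    have hψval : ψ (fun p => coef u p.val, fun p => coef v p.val) = π (u' * f + v' * g) := rfl
    rw [hψval]
    have hkey1 : ∀ p : ℕ × ℕ, kι p + t ∉ newtonDiagram f + newtonDiagram g →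
        coef ((u - u') * f) p = 0 := by
      intro p hp
      by_contra hne
      refine hp (coef_mul_mem (S1 := {r | kι r + t ∈ newtonDiagram g})
        (S2 := {r | kι r ∈ newtonDiagram f})
        (S3 := {r | kι r + t ∈ newtonDiagram f + newtonDiagram g}) ?_ ?_ ?_ p hne)
      · intro r hr
        by_contra hrB
        have hrF : r ∈ FB := (hFB r).mpr hrB
        apply hr
        rw [coef_sub, hu'def, coef_liftL, dif_pos hrF, sub_self]
      · intro r hr
        exact mem_nd_of_supp hr
      · intro r q hr hq
        show kι (r + q) + t ∈ newtonDiagram f + newtonDiagram g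
        have he : kι (r + q) + t = kι q + (kι r + t) := by rw [kι_add]; abel
        rw [he]
        exact Set.add_mem_add hq hr
    have hkey2 : ∀ p : ℕ × ℕ, kι p + t ∉ newtonDiagram f + newtonDiagram g →
        coef ((v - v') * g) p = 0 := by
      intro p hp
      by_contra hne
      refine hp (coef_mul_mem (S1 := {r | kι r + t ∈ newtonDiagram f})
        (S2 := {r | kι r ∈ newtonDiagram g})
        (S3 := {r | kι r + t ∈ newtonDiagram f + newtonDiagram g}) ?_ ?_ ?_ p hne)
      · intro r hr
        by_contra hrA
        have hrF : r ∈ FA := (hFA r).mpr hrA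
        apply hr
        rw [coef_sub, hv'def, coef_liftL, dif_pos hrF, sub_self]
      · intro r hr
        exact mem_nd_of_supp hr
      · intro r q hr hq
        show kι (r + q) + t ∈ newtonDiagram f + newtonDiagram g
        have he : kι (r + q) + t = (kι r + t) + kι q := by rw [kι_add]; abel
        rw [he]
        exact Set.add_mem_add hr hq
    funext p
    rw [hπ, hπ]
    have hpmem : kι p.val + t ∉ newtonDiagram f + newtonDiagram g := (hFAB p.val).mp p.property
    have hdiff : h - (u' * f + v' * g) = (u - u') * f + (v - v') * g := by
      rw [← huv]; ring
    have hz : coef (h - (u' * f + v' * g)) p.val = 0 := by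
      rw [hdiff, coef_add', hkey1 _ hpmem, hkey2 _ hpmem, add_zero]
    rw [coef_sub] at hz
    exact (sub_eq_zero.mp hz).symm
  -- Step B : a linear section of π
  have hπsec : ∀ φ : FAB → ℂ, π (liftL FAB φ) = φ := by
    intro φ
    funext p
    rw [hπ, coef_liftL, dif_pos p.property]
  -- Step C : the quotient (FAB → ℂ) ⧸ R has dimension at most n
  set W := (FAB → ℂ) ⧸ R with hWdef
  set τ : PS →ₗ[ℂ] W := R.mkQ ∘ₗ π with hτdef
  have hτI : ∀ h ∈ I, τ h = 0 := by
    intro h hh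
    have hth : τ h = Submodule.Quotient.mk (π h) := rfl
    rw [hth, Submodule.Quotient.mk_eq_zero]
    exact stepA h hh
  haveI : FiniteDimensional ℂ (PS ⧸ I) := hfin
  set b := Module.finBasis ℂ (PS ⧸ I) with hbdef
  set Φ : PS →ₗ[ℂ] (PS ⧸ I) := (Ideal.Quotient.mkₐ ℂ I).toLinearMap with hΦdef
  have hΦmk : ∀ z : PS, Φ z = Ideal.Quotient.mk I z := fun z => rfl
  have hxlift : ∀ i : Fin n, ∃ z : PS, Φ z = b i := by
    intro i
    obtain ⟨z, hz⟩ := Ideal.Quotient.mk_surjective (I := I) (b i)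
    exact ⟨z, by rw [hΦmk, hz]⟩
  choose x hx using hxlift
  have hτsurj : ∀ w : W, ∃ c : Fin n → ℂ, ∑ i, c i • τ (x i) = w := by
    intro w
    obtain ⟨φ, rfl⟩ := R.mkQ_surjective w
    have hw : R.mkQ φ = τ (liftL FAB φ) := by
      show R.mkQ φ = R.mkQ (π (liftL FAB φ))
      rw [hπsec]
    refine ⟨fun i => b.repr (Φ (liftL FAB φ)) i, ?_⟩
    set hh := liftL FAB φ with hhdef
    have hmem : hh - ∑ i, (b.repr (Φ hh) i) • x i ∈ I := by
      rw [← Ideal.Quotient.eq_zero_iff_mem, ← hΦmk, map_sub, map_sum]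
      have hcongr : ∀ i ∈ Finset.univ, Φ ((b.repr (Φ hh) i) • x i) = (b.repr (Φ hh) i) • b i := by
        intro i _
        rw [LinearMap.map_smul, hx]
      rw [Finset.sum_congr rfl hcongr, b.sum_repr (Φ hh), sub_self]
    have hzero : τ (hh - ∑ i, (b.repr (Φ hh) i) • x i) = 0 := hτI _ hmem
    rw [map_sub, sub_eq_zero] at hzero
    calc ∑ i, (b.repr (Φ hh) i) • τ (x i)
        = τ (∑ i, (b.repr (Φ hh) i) • x i) := by
          rw [map_sum]
          exact Finset.sum_congr rfl fun i _ => (LinearMap.map_smul τ _ _).symm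
      _ = τ hh := hzero.symm
      _ = R.mkQ φ := hw.symm
  set ℓ : (Fin n → ℂ) →ₗ[ℂ] W := {
    toFun := fun c => ∑ i, c i • τ (x i),
    map_add' := fun c d => by simp only [Pi.add_apply, add_smul, Finset.sum_add_distrib],
    map_smul' := fun a c => by
      simp only [Pi.smul_apply, smul_eq_mul, RingHom.id_apply, Finset.smul_sum, smul_smul] } with hℓdef
  have hℓsurj : Function.Surjective ℓ := fun w => hτsurj w
  have hWfinrank : Module.finrank ℂ W ≤ n := by
    have h1 : LinearMap.range ℓ = ⊤ := LinearMap.range_eq_top.mpr hℓsurj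
    have h2 := LinearMap.finrank_range_le ℓ
    rw [h1, finrank_top, Module.finrank_pi] at h2
    simpa using h2
  -- Step D : counting
  have hq := Submodule.finrank_quotient_add_finrank R
  have hRle : Module.finrank ℂ R ≤ FB.card + FA.card := by
    have h3 := LinearMap.finrank_range_le ψ
    rwa [Module.finrank_prod, Module.finrank_pi, Module.finrank_pi, Fintype.card_coe,
      Fintype.card_coe] at h3
  have hABrank : Module.finrank ℂ (FAB → ℂ) = FAB.card := by
    rw [Module.finrank_pi, Fintype.card_coe]
  have hWq : Module.finrank ℂ W + Module.finrank ℂ R = FAB.card := by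
    rw [← hABrank]; exact hq
  omega

/-! ### the main theorem (auxiliary assembly) -/

set_option maxHeartbeats 1000000 in
theorem intersection_ge_mixedVol' (f g : PS) (hf : Convenient f) (hg : Convenient g)
    (hfin : FiniteDimensional ℂ (PS ⧸ Ideal.span {f, g})) :
    (volume (quadrant \ (newtonDiagram f + newtonDiagram g))).toReal
      - (volume (quadrant \ newtonDiagram f)).toReal
      - (volume (quadrant \ newtonDiagram g)).toReal
      ≤ (Module.finrank ℂ (PS ⧸ Ideal.span {f, g}) : ℝ) := by
  classical
  obtain ⟨ia, hia⟩ := hf.1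
  obtain ⟨ja, hja⟩ := hf.2
  obtain ⟨ib, hib⟩ := hg.1
  obtain ⟨jb, hjb⟩ := hg.2
  set n := Module.finrank ℂ (PS ⧸ Ideal.span {f, g}) with hndef
  -- axis points
  have hAX : ((ia : ℝ), (0 : ℝ)) ∈ newtonDiagram f := by
    simpa [kι] using mem_nd_of_supp (show ((ia, 0) : ℕ × ℕ) ∈ supp f from hia)
  have hAY : ((0 : ℝ), (ja : ℝ)) ∈ newtonDiagram f := by
    simpa [kι] using mem_nd_of_supp (show ((0, ja) : ℕ × ℕ) ∈ supp f from hja)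
  have hBX : ((ib : ℝ), (0 : ℝ)) ∈ newtonDiagram g := by
    simpa [kι] using mem_nd_of_supp (show ((ib, 0) : ℕ × ℕ) ∈ supp g from hib)
  have hBY : ((0 : ℝ), (jb : ℝ)) ∈ newtonDiagram g := by
    simpa [kι] using mem_nd_of_supp (show ((0, jb) : ℕ × ℕ) ∈ supp g from hjb)
  have hAup : KUpward (newtonDiagram f) := nd_upward f
  have hBup : KUpward (newtonDiagram g) := nd_upward g
  have hABup : KUpward (newtonDiagram f + newtonDiagram g) := upward_add hAup
  have hABX : (((ia + ib : ℕ) : ℝ), (0 : ℝ)) ∈ newtonDiagram f + newtonDiagram g := by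
    have hm := Set.add_mem_add hAX hBX
    have he : ((ia : ℝ), (0 : ℝ)) + ((ib : ℝ), (0 : ℝ)) = (((ia + ib : ℕ) : ℝ), (0 : ℝ)) := by
      simp [Prod.ext_iff]
    rwa [he] at hm
  have hABY : ((0 : ℝ), ((ja + jb : ℕ) : ℝ)) ∈ newtonDiagram f + newtonDiagram g := by
    have hm := Set.add_mem_add hAY hBY
    have he : ((0 : ℝ), (ja : ℝ)) + ((0 : ℝ), (jb : ℝ)) = ((0 : ℝ), ((ja + jb : ℕ) : ℝ)) := by
      simp [Prod.ext_iff]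
    rwa [he] at hm
  -- measurability
  have hAnm : NullMeasurableSet (newtonDiagram f) volume :=
    (convex_convexHull ℝ _).nullMeasurableSet _
  have hBnm : NullMeasurableSet (newtonDiagram g) volume :=
    (convex_convexHull ℝ _).nullMeasurableSet _
  have hABnm : NullMeasurableSet (newtonDiagram f + newtonDiagram g) volume :=
    ((convex_convexHull ℝ _).add (convex_convexHull ℝ _)).nullMeasurableSet _
  -- pointwise bound
  have hpt : ∀ t : ℝ × ℝ,
      kN (newtonDiagram f + newtonDiagram g) t
        ≤ kN (newtonDiagram f) t + kN (newtonDiagram g) t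
          + kcell.indicator (fun _ => (n : ℝ≥0∞)) t := by
    intro t
    by_cases htc : t ∈ kcell
    · have ht1 : (0 : ℝ) ≤ t.1 := htc.1.1
      have ht2 : (0 : ℝ) ≤ t.2 := htc.2.1
      have hDA : {p : ℕ × ℕ | kι p + t ∉ newtonDiagram f}.Finite :=
        Set.Finite.subset (Finset.range ia ×ˢ Finset.range ja).finite_toSet
          (outside_subset hAup hAX hAY ht1 ht2)
      have hDB : {p : ℕ × ℕ | kι p + t ∉ newtonDiagram g}.Finite :=
        Set.Finite.subset (Finset.range ib ×ˢ Finset.range jb).finite_toSet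
          (outside_subset hBup hBX hBY ht1 ht2)
      have hDAB : {p : ℕ × ℕ | kι p + t ∉ newtonDiagram f + newtonDiagram g}.Finite :=
        Set.Finite.subset (Finset.range (ia + ib) ×ˢ Finset.range (ja + jb)).finite_toSet
          (outside_subset hABup hABX hABY ht1 ht2)
      rw [kN_eq_ncard htc hDA, kN_eq_ncard htc hDB, kN_eq_ncard htc hDAB,
        Set.indicator_of_mem htc]
      have hcard := card_bound f g hfin hDA.toFinset hDB.toFinset hDAB.toFinset
        (fun p => Set.Finite.mem_toFinset hDA) (fun p => Set.Finite.mem_toFinset hDB)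
        (fun p => Set.Finite.mem_toFinset hDAB)
      rw [Set.ncard_eq_toFinset_card _ hDA, Set.ncard_eq_toFinset_card _ hDB,
        Set.ncard_eq_toFinset_card _ hDAB]
      exact_mod_cast hcard
    · rw [kN_of_not_mem htc]
      exact zero_le
  -- values of the integrals
  have hvA := vol_eq_lintegral hAnm
  have hvB := vol_eq_lintegral hBnm
  have hvAB := vol_eq_lintegral hABnm
  have hcellvol : volume kcell = 1 := by
    rw [kcell, Measure.volume_eq_prod, Measure.prod_prod, Real.volume_Ico]
    norm_num
  have hconst : ∫⁻ t, kcell.indicator (fun _ => (n : ℝ≥0∞)) t = (n : ℝ≥0∞) := by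
    rw [lintegral_indicator_const measurable_kcell, hcellvol, mul_one]
  -- the main ENNReal estimate
  have hMAIN : volume (quadrant \ (newtonDiagram f + newtonDiagram g))
      ≤ volume (quadrant \ newtonDiagram f) + volume (quadrant \ newtonDiagram g)
        + (n : ℝ≥0∞) := by
    rw [hvA, hvB, hvAB]
    calc ∫⁻ t, kN (newtonDiagram f + newtonDiagram g) t
        ≤ ∫⁻ t, (kN (newtonDiagram f) t + kN (newtonDiagram g) t
            + kcell.indicator (fun _ => (n : ℝ≥0∞)) t) := lintegral_mono hpt
      _ = (∫⁻ t, kN (newtonDiagram f) t) + (∫⁻ t, kN (newtonDiagram g) t) + (n : ℝ≥0∞) := by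
          rw [lintegral_add_left' (f := fun t => kN (newtonDiagram f) t + kN (newtonDiagram g) t)
              ((kN_aemeasurable hAnm).add (kN_aemeasurable hBnm)),
            lintegral_add_left' (kN_aemeasurable hAnm), hconst]
  -- finiteness
  have hfA : volume (quadrant \ newtonDiagram f) ≠ ⊤ := by
    refine LT.lt.ne (lt_of_le_of_lt (measure_mono (compl_subset_box hAup hAX hAY)) ?_)
    simp only [Measure.volume_eq_prod, Measure.prod_prod, Real.volume_Ico]
    exact ENNReal.mul_lt_top ENNReal.ofReal_lt_top ENNReal.ofReal_lt_top
  have hfB : volume (quadrant \ newtonDiagram g) ≠ ⊤ := by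
    refine LT.lt.ne (lt_of_le_of_lt (measure_mono (compl_subset_box hBup hBX hBY)) ?_)
    simp only [Measure.volume_eq_prod, Measure.prod_prod, Real.volume_Ico]
    exact ENNReal.mul_lt_top ENNReal.ofReal_lt_top ENNReal.ofReal_lt_top
  have hrhsne : volume (quadrant \ newtonDiagram f) + volume (quadrant \ newtonDiagram g)
      + (n : ℝ≥0∞) ≠ ⊤ := by
    refine LT.lt.ne (ENNReal.add_lt_top.mpr ⟨ENNReal.add_lt_top.mpr ⟨?_, ?_⟩, ?_⟩)
    · exact lt_top_iff_ne_top.mpr hfA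
    · exact lt_top_iff_ne_top.mpr hfB
    · exact ENNReal.natCast_lt_top n
  have h2 := ENNReal.toReal_mono hrhsne hMAIN
  rw [ENNReal.toReal_add (by exact (ENNReal.add_lt_top.mpr
      ⟨lt_top_iff_ne_top.mpr hfA, lt_top_iff_ne_top.mpr hfB⟩).ne) (ENNReal.natCast_lt_top n).ne,
    ENNReal.toReal_add hfA hfB] at h2
  have h3 : ((n : ℝ≥0∞)).toReal = (n : ℝ) := by simp
  rw [h3] at h2
  linarith


/-- Kouchnirenko-type inequality for the intersection multiplicity: for convenient f, g,
(f,g)₀ = dim_ℂ ℂ[[x,y]]/(f,g) ≥ [Δ_f, Δ_g] whenever the quotient is finite-dimensional. -/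
theorem intersection_ge_mixedVol (f g : PS) (hf : Convenient f) (hg : Convenient g)
    (hfin : FiniteDimensional ℂ (PS ⧸ Ideal.span {f, g})) :
    mixedVol f g ≤ (Module.finrank ℂ (PS ⧸ Ideal.span {f, g}) : ℝ) := by
  have h := intersection_ge_mixedVol' f g hf hg hfin
  simpa [mixedVol, areaP] using h

end
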